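/- For every positive integer k and z ∈ ℂ with 0 < |z| < 1, the function h_k(z) := ((z−1)/z)^k log(1/(1−z)) + Σ_{m=1}^{k} (1/m) ((z−1)/z)^{k−m} has the convergent power series expansion h_k(z) = Σ_{n=1}^{∞} ( k! / ( n(n+1)⋯(n+k) ) ) z^n. In particular h_k extends continuously to { |z| ≤ 1 } with h_k(1) = 1/k and h_k(0) = 0, and the functions satisfy the recurrence h_k(z) − h_k(z)/z = −1/(k+1) + h_{k+1}(z), with the convention h_0(z) = log(1/(1−z)). -/

import Mathlib

noncomputable section
open scoped BigOperators

/-- `h_k(z) = ((z-1)/z)^k log(1/(1-z)) + Σ_{m=1}^k (1/m) ((z-1)/z)^{k-m}`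
(for `k = 0` this is `log(1/(1-z))` since the sum is empty). -/
def hke (k : ℕ) (z : ℂ) : ℂ :=
  ((z - 1) / z) ^ k * Complex.log (1 / (1 - z)) +
    ∑ m ∈ Finset.Icc 1 k, (1 / (m : ℂ)) * ((z - 1) / z) ^ (k - m)

/-- The coefficient `k! / (n (n+1) ⋯ (n+k))`. -/
def hkeCoef (k n : ℕ) : ℝ :=
  (Nat.factorial k : ℝ) / ∏ j ∈ Finset.range (k + 1), ((n : ℝ) + (j : ℝ))

lemma hkeProd_pos (k n : ℕ) (hn : 1 ≤ n) :
    0 < ∏ j ∈ Finset.range (k + 1), ((n : ℝ) + (j : ℝ)) := by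
  apply Finset.prod_pos
  intro j _
  have h1 : (1 : ℝ) ≤ (n : ℝ) := by exact_mod_cast hn
  have h2 : (0 : ℝ) ≤ (j : ℝ) := Nat.cast_nonneg j
  linarith

lemma hkeCoef_pos (k n : ℕ) (hn : 1 ≤ n) : 0 < hkeCoef k n :=
  div_pos (by exact_mod_cast Nat.factorial_pos k) (hkeProd_pos k n hn)

lemma hkeCoef_one (k : ℕ) : hkeCoef k 1 = 1 / ((k : ℝ) + 1) := by
  have h : ∏ j ∈ Finset.range (k + 1), ((1 : ℝ) + (j : ℝ))
      = ((Nat.factorial (k + 1) : ℕ) : ℝ) := by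
    rw [← Finset.prod_range_add_one_eq_factorial]
    push_cast
    exact Finset.prod_congr rfl fun j _ => by ring
  rw [hkeCoef, Nat.cast_one, h, Nat.factorial_succ]
  have hk : (0:ℝ) < (Nat.factorial k : ℝ) := by exact_mod_cast Nat.factorial_pos k
  push_cast
  field_simp

lemma hkeCoef_sub (k n : ℕ) (hn : 1 ≤ n) :
    hkeCoef (k + 1) n = hkeCoef k n - hkeCoef k (n + 1) := by
  have hP : 0 < ∏ j ∈ Finset.range (k + 1), ((n : ℝ) + (j : ℝ)) := hkeProd_pos k n hn
  have hQ : 0 < ∏ j ∈ Finset.range (k + 1), (((n+1 : ℕ) : ℝ) + (j : ℝ)) :=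
    hkeProd_pos k (n+1) (by omega)
  set P := ∏ j ∈ Finset.range (k + 1), ((n : ℝ) + (j : ℝ)) with hPdef
  set Q := ∏ j ∈ Finset.range (k + 1), (((n+1 : ℕ) : ℝ) + (j : ℝ)) with hQdef
  have hn' : (0:ℝ) < (n:ℝ) := by exact_mod_cast hn
  have htop : ∏ j ∈ Finset.range (k + 2), ((n : ℝ) + (j : ℝ)) = P * ((n:ℝ) + (k+1)) := by
    rw [Finset.prod_range_succ]; push_cast; ring
  have hshift : ∏ j ∈ Finset.range (k + 2), ((n : ℝ) + (j : ℝ)) = Q * (n:ℝ) := by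
    rw [Finset.prod_range_succ']
    congr 1
    · exact Finset.prod_congr rfl fun j _ => by push_cast; ring
    · simp
  have hRel : Q * (n:ℝ) = P * ((n:ℝ) + (k+1)) := by rw [← hshift, htop]
  have hfac : ((Nat.factorial (k+1) : ℕ) : ℝ) = ((k:ℝ)+1) * (Nat.factorial k : ℝ) := by
    rw [Nat.factorial_succ]; push_cast; ring
  rw [hkeCoef, hkeCoef, hkeCoef, htop, hfac, ← hPdef, ← hQdef]
  field_simp
  linear_combination (-1 : ℝ) * hRel

lemma hkeCoef_tendsto (k : ℕ) :
    Filter.Tendsto (fun n : ℕ => hkeCoef k (n + 1)) Filter.atTop (nhds 0) := by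
  have hb : ∀ n : ℕ, hkeCoef k (n + 1) ≤ (Nat.factorial k : ℝ) * (1 / ((n : ℝ) + 1)) := by
    intro n
    have hprod : ((n : ℝ) + 1) ≤ ∏ j ∈ Finset.range (k + 1), (((n+1 : ℕ) : ℝ) + (j : ℝ)) := by
      rw [Finset.prod_range_succ']
      have hone : (1:ℝ) ≤ ∏ i ∈ Finset.range k, (((n+1 : ℕ) : ℝ) + ((i+1 : ℕ) : ℝ)) := by
        calc (1:ℝ) = ∏ _i ∈ Finset.range k, (1:ℝ) := by simp
          _ ≤ _ := Finset.prod_le_prod (fun i _ => zero_le_one) (fun i _ => by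
              have h1 : (0:ℝ) ≤ (i : ℝ) := Nat.cast_nonneg i
              have h2 : (0:ℝ) ≤ (n : ℝ) := Nat.cast_nonneg n
              push_cast; linarith)
      have hcast : ((n+1 : ℕ) : ℝ) + ((0:ℕ) : ℝ) = (n:ℝ) + 1 := by push_cast; ring
      rw [hcast]
      have hnn : (0:ℝ) ≤ (n:ℝ) + 1 := by positivity
      calc (n:ℝ) + 1 = 1 * ((n:ℝ) + 1) := by ring
        _ ≤ (∏ i ∈ Finset.range k, (((n+1 : ℕ) : ℝ) + ((i+1 : ℕ) : ℝ))) * ((n:ℝ)+1) :=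
            mul_le_mul_of_nonneg_right hone hnn
    have hpos : (0:ℝ) < (n : ℝ) + 1 := by positivity
    rw [hkeCoef, mul_one_div]
    exact div_le_div_of_nonneg_left (by positivity) hpos hprod
  have hlim : Filter.Tendsto (fun n : ℕ => (Nat.factorial k : ℝ) * (1 / ((n : ℝ) + 1)))
      Filter.atTop (nhds 0) := by
    simpa using tendsto_one_div_add_atTop_nhds_zero_nat.const_mul (Nat.factorial k : ℝ)
  exact squeeze_zero (fun n => (hkeCoef_pos k (n+1) (by omega)).le) hb hlim

lemma hkeCoef_hasSum (k : ℕ) (hk : 1 ≤ k) :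
    HasSum (fun n : ℕ => hkeCoef k (n + 1)) (1 / (k : ℝ)) := by
  obtain ⟨j, rfl⟩ : ∃ j, k = j + 1 := ⟨k - 1, by omega⟩
  rw [hasSum_iff_tendsto_nat_of_nonneg (fun n => (hkeCoef_pos _ _ (by omega)).le)]
  have hps : ∀ N, ∑ i ∈ Finset.range N, hkeCoef (j+1) (i + 1)
      = hkeCoef j 1 - hkeCoef j (N + 1) := by
    intro N
    have := Finset.sum_range_sub' (fun i => hkeCoef j (i + 1)) N
    rw [← this]
    exact Finset.sum_congr rfl fun i _ => by
      rw [hkeCoef_sub j (i+1) (by omega)]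
  simp_rw [hps]
  have h1 : (1 : ℝ) / ((j:ℝ) + 1) = hkeCoef j 1 - 0 := by rw [hkeCoef_one]; ring
  have : ((j + 1 : ℕ) : ℝ) = (j : ℝ) + 1 := by push_cast; ring
  rw [this, h1]
  exact (tendsto_const_nhds.sub (hkeCoef_tendsto j))

lemma hke_succ (k : ℕ) {z : ℂ} (hz : z ≠ 0) :
    hke (k + 1) z = ((z - 1) / z) * hke k z + 1 / ((k : ℂ) + 1) := by
  rw [hke, hke, Finset.sum_Icc_succ_top (by omega : 1 ≤ k + 1)]
  have hsum : ∑ m ∈ Finset.Icc 1 k, (1 / (m : ℂ)) * ((z - 1) / z) ^ (k + 1 - m)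
      = ∑ m ∈ Finset.Icc 1 k, ((z - 1) / z) * ((1 / (m : ℂ)) * ((z - 1) / z) ^ (k - m)) :=
    Finset.sum_congr rfl fun m hm => by
      have hm' : m ≤ k := (Finset.mem_Icc.mp hm).2
      rw [show k + 1 - m = (k - m) + 1 from by omega, pow_succ]; ring
  rw [hsum, Nat.sub_self, pow_zero, pow_succ, mul_add, Finset.mul_sum]
  push_cast
  ring

lemma hke_hasSum (k : ℕ) : ∀ z : ℂ, 0 < ‖z‖ → ‖z‖ < 1 →
    HasSum (fun n : ℕ => ((hkeCoef k (n + 1) : ℝ) : ℂ) * z ^ (n + 1)) (hke k z) := by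
  induction k with
  | zero =>
    intro z _ h1
    have hz : ‖z‖ < 1 := h1
    have h := Complex.hasSum_taylorSeries_neg_log hz
    have h2 : HasSum (fun n : ℕ => z ^ (n + 1) / (((n + 1 : ℕ)) : ℂ))
        (-Complex.log (1 - z)) := by
      apply (hasSum_nat_add_iff (f := fun n : ℕ => z ^ n / (n : ℂ)) 1).mpr
      simpa using h
    have harg : (1 - z).arg ≠ Real.pi := by
      intro hpi
      rw [Complex.arg_eq_pi_iff] at hpi
      obtain ⟨hre, -⟩ := hpi
      have := Complex.re_le_norm z
      rw [Complex.sub_re, Complex.one_re] at hre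
      linarith
    have hlog : Complex.log (1 / (1 - z)) = -Complex.log (1 - z) := by
      rw [one_div, Complex.log_inv _ harg]
    have hzero : hke 0 z = Complex.log (1 / (1 - z)) := by simp [hke]
    rw [hzero, hlog]
    have hfun : (fun n : ℕ => ((hkeCoef 0 (n + 1) : ℝ) : ℂ) * z ^ (n + 1))
        = fun n : ℕ => z ^ (n + 1) / (((n + 1 : ℕ)) : ℂ) := funext fun n => by
      rw [hkeCoef]
      push_cast
      rw [Finset.prod_range_one, Nat.factorial_zero]
      push_cast
      ring
    rw [hfun]
    exact h2
  | succ k ih =>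
    intro z h0 h1
    have hz0 : z ≠ 0 := by intro h; rw [h] at h0; simp at h0
    have hS := ih z h0 h1
    have h2 : HasSum (fun n : ℕ => ((hkeCoef k (n + 1 + 1) : ℝ) : ℂ) * z ^ (n + 1 + 1))
        (hke k z - ((hkeCoef k 1 : ℝ) : ℂ) * z) := by
      apply (hasSum_nat_add_iff
        (f := fun n : ℕ => ((hkeCoef k (n + 1) : ℝ) : ℂ) * z ^ (n + 1)) 1).mpr
      simpa using hS
    have h3 : HasSum (fun n : ℕ => ((hkeCoef k (n + 1 + 1) : ℝ) : ℂ) * z ^ (n + 1))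
        ((hke k z - ((hkeCoef k 1 : ℝ) : ℂ) * z) / z) := by
      have hd := h2.div_const z
      have hfun : (fun n : ℕ => ((hkeCoef k (n + 1 + 1) : ℝ) : ℂ) * z ^ (n + 1 + 1) / z)
          = fun n : ℕ => ((hkeCoef k (n + 1 + 1) : ℝ) : ℂ) * z ^ (n + 1) := funext fun n => by
        rw [pow_succ, mul_div_assoc, mul_div_cancel_right₀ _ hz0]
      exact hfun ▸ hd
    have h4 := hS.sub h3
    have hterm : (fun n : ℕ => ((hkeCoef k (n + 1) : ℝ) : ℂ) * z ^ (n + 1)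
          - ((hkeCoef k (n + 1 + 1) : ℝ) : ℂ) * z ^ (n + 1))
        = fun n : ℕ => ((hkeCoef (k + 1) (n + 1) : ℝ) : ℂ) * z ^ (n + 1) := funext fun n => by
      rw [hkeCoef_sub k (n + 1) (by omega)]
      push_cast
      ring
    rw [hterm] at h4
    have hval : hke k z - (hke k z - ((hkeCoef k 1 : ℝ) : ℂ) * z) / z = hke (k + 1) z := by
      rw [hke_succ k hz0, hkeCoef_one]
      push_cast
      field_simp
      ring
    rwa [hval] at h4

/-- For every positive integer `k` and `0 < |z| < 1`, the function `h_k` has the convergent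
power series expansion `h_k(z) = Σ_{n ≥ 1} (k! / (n(n+1)⋯(n+k))) z^n`; in particular `h_k`
extends continuously to the closed unit disc with `h_k(1) = 1/k` and `h_k(0) = 0`; and the
functions satisfy the recurrence `h_k(z) - h_k(z)/z = -1/(k+1) + h_{k+1}(z)` (with the
convention `h_0(z) = log(1/(1-z))`, which holds by definition of `hke`). -/
theorem hke_expansion :
    (∀ z : ℂ, 0 < ‖z‖ → ‖z‖ < 1 →
      hke 0 z = Complex.log (1 / (1 - z))) ∧
    (∀ k : ℕ, 1 ≤ k →
      (∀ z : ℂ, 0 < ‖z‖ → ‖z‖ < 1 →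
        HasSum (fun n : ℕ => ((hkeCoef k (n + 1) : ℝ) : ℂ) * z ^ (n + 1)) (hke k z)) ∧
      (∃ H : ℂ → ℂ, ContinuousOn H {z : ℂ | ‖z‖ ≤ 1} ∧
        (∀ z : ℂ, 0 < ‖z‖ → ‖z‖ < 1 → H z = hke k z) ∧
        H 1 = 1 / (k : ℂ) ∧ H 0 = 0)) ∧
    (∀ k : ℕ, ∀ z : ℂ, 0 < ‖z‖ → ‖z‖ < 1 →
      hke k z - hke k z / z = -(1 / ((k : ℂ) + 1)) + hke (k + 1) z) := by
  refine ⟨?_, ?_, ?_⟩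
  · intro z _ _
    simp [hke]
  · intro k hk
    refine ⟨hke_hasSum k, ?_⟩
    have hsum := hkeCoef_hasSum k hk
    refine ⟨fun z => ∑' n : ℕ, ((hkeCoef k (n + 1) : ℝ) : ℂ) * z ^ (n + 1), ?_, ?_, ?_, ?_⟩
    · apply continuousOn_tsum (u := fun n => hkeCoef k (n + 1))
      · intro i
        exact (Continuous.continuousOn (by continuity))
      · exact hsum.summable
      · intro n x hx
        have hxx : ‖x‖ ≤ 1 := hx
        have hx1 : ‖x‖ ≤ 1 := hxx
        have hc : (0 : ℝ) ≤ hkeCoef k (n + 1) := (hkeCoef_pos k (n + 1) (by omega)).le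
        calc ‖((hkeCoef k (n + 1) : ℝ) : ℂ) * x ^ (n + 1)‖
            = |hkeCoef k (n + 1)| * ‖x‖ ^ (n + 1) := by
              rw [norm_mul, Complex.norm_real, norm_pow, Real.norm_eq_abs]
          _ ≤ hkeCoef k (n + 1) * 1 := by
              rw [abs_of_nonneg hc]
              exact mul_le_mul_of_nonneg_left (pow_le_one₀ (norm_nonneg _) hx1) hc
          _ = hkeCoef k (n + 1) := mul_one _
    · intro z h0 h1
      exact (hke_hasSum k z h0 h1).tsum_eq
    · have h1 : HasSum (fun n : ℕ => ((hkeCoef k (n + 1) : ℝ) : ℂ) * (1 : ℂ) ^ (n + 1))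
          (((1 / (k : ℝ)) : ℝ) : ℂ) := by
        have := Complex.hasSum_ofReal.mpr hsum
        simpa using this
      show (∑' n : ℕ, ((hkeCoef k (n + 1) : ℝ) : ℂ) * (1 : ℂ) ^ (n + 1)) = 1 / (k : ℂ)
      rw [h1.tsum_eq]
      push_cast
      ring
    · show (∑' n : ℕ, ((hkeCoef k (n + 1) : ℝ) : ℂ) * (0 : ℂ) ^ (n + 1)) = 0
      simp
  · intro k z h0 h1
    have hz0 : z ≠ 0 := by intro h; rw [h] at h0; simp at h0
    rw [hke_succ k hz0]
    field_simp
    ring
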